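/- The relation C_1^2 C_2 = (1+27q)^{−1} for local P^2: In ℚ[[q]] define I_1 = 3·Σ_{d≥1}(−1)^d (3d−1)!/(d!)^3 q^d, I_{2,0} = 3·Σ_{d≥1}(−1)^d (3d−1)!/(d!)^3 (3Har[3d−1] − 3Har[d]) q^d with Har[m] = Σ_{k=1}^{m} 1/k, C_1 = 1 + 𝖣I_1, J = (I_1 + 𝖣I_{2,0})/C_1, and C_2 = 1 + 𝖣J, where 𝖣 = q·d/dq. Then (1+27q)·C_1^2·C_2 = 1 in ℚ[[q]]. -/

import Mathlib

/-!
STATEMENT 8: The relation C₁²C₂ = (1+27q)⁻¹ for local P².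
-/

noncomputable section

/-- The derivation `𝖣 = q·d/dq` on `ℚ[[q]]`. -/
def Dq (G : PowerSeries ℚ) : PowerSeries ℚ :=
  PowerSeries.mk fun d => (d : ℚ) * PowerSeries.coeff d G

/-- Harmonic number `Har[m] = Σ_{k=1}^m 1/k`. -/
def Har (m : ℕ) : ℚ := ∑ k ∈ Finset.range m, ((k : ℚ) + 1)⁻¹

/-- `I₁ = 3·Σ_{d≥1} (−1)^d (3d−1)!/(d!)^3 q^d`. -/
def I₁ : PowerSeries ℚ :=
  PowerSeries.mk fun d => if d = 0 then 0 else
    3 * (-1 : ℚ) ^ d * ((3 * d - 1).factorial : ℚ) / ((d.factorial : ℚ)) ^ 3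

/-- `I₂₀ = 3·Σ_{d≥1} (−1)^d (3d−1)!/(d!)^3 (3Har[3d−1] − 3Har[d]) q^d`. -/
def I₂₀ : PowerSeries ℚ :=
  PowerSeries.mk fun d => if d = 0 then 0 else
    3 * (-1 : ℚ) ^ d * ((3 * d - 1).factorial : ℚ) / ((d.factorial : ℚ)) ^ 3
      * (3 * Har (3 * d - 1) - 3 * Har d)

/-- `C₁ = 1 + 𝖣I₁`. -/
def C₁ : PowerSeries ℚ := 1 + Dq I₁

/-- `J = (I₁ + 𝖣I₂₀)/C₁`. -/
def J : PowerSeries ℚ := (I₁ + Dq I₂₀) * C₁⁻¹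

/-- `C₂ = 1 + 𝖣J`. -/
def C₂ : PowerSeries ℚ := 1 + Dq J

open PowerSeries

/-! ### Basic properties of `Dq` -/

lemma coeff_Dq (n : ℕ) (f : ℚ⟦X⟧) : coeff n (Dq f) = n * coeff n f :=
  coeff_mk _ _

lemma Dq_add (f g : ℚ⟦X⟧) : Dq (f + g) = Dq f + Dq g := by
  ext n; simp [coeff_Dq]; ring

lemma Dq_sub (f g : ℚ⟦X⟧) : Dq (f - g) = Dq f - Dq g := by
  ext n; simp [coeff_Dq]; ring

lemma Dq_mul (f g : ℚ⟦X⟧) : Dq (f * g) = Dq f * g + f * Dq g := by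
  ext n
  simp only [coeff_Dq, map_add, coeff_mul]
  rw [Finset.mul_sum, ← Finset.sum_add_distrib]
  apply Finset.sum_congr rfl
  intro p hp
  rw [Finset.HasAntidiagonal.mem_antidiagonal] at hp
  rw [← hp]; push_cast; ring

lemma Dq_one : Dq 1 = 0 := by
  ext n; rcases n with _|n <;> simp [coeff_Dq, coeff_one]

lemma Dq_X : Dq X = X := by
  ext n; rcases n with _|n
  · simp [coeff_Dq]
  · rcases n with _|n <;> simp [coeff_Dq, coeff_X]

lemma Dq_C (a : ℚ) : Dq (C a : ℚ⟦X⟧) = 0 := by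
  ext n; rcases n with _|n <;> simp [coeff_Dq, coeff_C]

/-! ### Coefficients -/

/-- The coefficient `a_d = 3(−1)^d (3d−1)!/(d!)³`. -/
def aa (d : ℕ) : ℚ :=
  3 * (-1 : ℚ) ^ d * ((3 * d - 1).factorial : ℚ) / ((d.factorial : ℚ)) ^ 3

/-- The coefficient `b_d = a_d (3Har[3d−1] − 3Har[d])`. -/
def bb (d : ℕ) : ℚ := aa d * (3 * Har (3 * d - 1) - 3 * Har d)

lemma Har_succ (m : ℕ) : Har (m + 1) = Har m + ((m : ℚ) + 1)⁻¹ := by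
  simp [Har, Finset.sum_range_succ]

lemma fact3 (m : ℕ) : ((m + 3).factorial : ℚ)
    = ((m : ℚ) + 3) * ((m : ℚ) + 2) * ((m : ℚ) + 1) * (m.factorial : ℚ) := by
  show (((m + 2) + 1).factorial : ℚ) = _
  rw [Nat.factorial_succ, Nat.factorial_succ, Nat.factorial_succ]
  push_cast; ring

lemma aa_rec (e : ℕ) :
    ((e : ℚ) + 2) ^ 3 * aa (e + 2)
      = -(3 * (e : ℚ) + 5) * (3 * (e : ℚ) + 4) * (3 * (e : ℚ) + 3) * aa (e + 1) := by
  have h1 : 3 * (e + 2) - 1 = (3 * e + 2) + 3 := by omega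
  have h2 : 3 * (e + 1) - 1 = 3 * e + 2 := by omega
  have h3 : ((e + 2).factorial : ℚ) = ((e : ℚ) + 2) * ((e + 1).factorial : ℚ) := by
    rw [show e + 2 = (e + 1) + 1 from rfl, Nat.factorial_succ]; push_cast; ring
  have hf : (((e + 1).factorial : ℚ)) ≠ 0 := by positivity
  have he : ((e : ℚ) + 2) ≠ 0 := by positivity
  rw [aa, aa, h1, h2, fact3, pow_succ, h3]
  push_cast
  field_simp
  ring

lemma aa_one : aa 1 = -6 := by
  norm_num [aa, Nat.factorial]

lemma bb_one : bb 1 = -9 := by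
  have : Har 2 = 3/2 := by norm_num [Har, Finset.sum_range_succ]
  have h1 : Har 1 = 1 := by norm_num [Har, Finset.sum_range_succ]
  simp only [bb, aa_one]
  norm_num [this, h1]

lemma bb_rec (e : ℕ) :
    ((e : ℚ) + 2) ^ 3 * bb (e + 2)
      + 3 * ((e : ℚ) + 1) * (3 * (e : ℚ) + 5) * (3 * (e : ℚ) + 4) * bb (e + 1)
      + 3 * ((e : ℚ) + 2) ^ 2 * aa (e + 2)
      + 3 * (27 * ((e : ℚ) + 1) ^ 2 + 18 * ((e : ℚ) + 1) + 2) * aa (e + 1) = 0 := by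
  have h1 : 3 * (e + 2) - 1 = (3 * e + 2) + 3 := by omega
  have h2 : 3 * (e + 1) - 1 = 3 * e + 2 := by omega
  have ha : aa (e + 2) =
      -(3 * (e : ℚ) + 5) * (3 * (e : ℚ) + 4) * (3 * (e : ℚ) + 3) * aa (e + 1)
        / ((e : ℚ) + 2) ^ 3 := by
    rw [eq_div_iff (by positivity)]
    linear_combination aa_rec e
  have hH3 : Har ((3 * e + 2) + 3) = Har (3 * e + 2)
      + ((3 * (e : ℚ) + 2) + 1)⁻¹ + ((3 * (e : ℚ) + 3) + 1)⁻¹ + ((3 * (e : ℚ) + 4) + 1)⁻¹ := by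
    rw [show (3 * e + 2) + 3 = ((3 * e + 2) + 1 + 1) + 1 from rfl,
      Har_succ, Har_succ, Har_succ]
    push_cast; ring
  have hH1 : Har (e + 2) = Har (e + 1) + ((e : ℚ) + 2)⁻¹ := by
    rw [show e + 2 = (e + 1) + 1 from rfl, Har_succ]; push_cast; ring
  rw [bb, bb, h1, h2, hH3, hH1, ha]
  have h5 : (3 * (e : ℚ) + 3) ≠ 0 := by positivity
  have h6 : (3 * (e : ℚ) + 4) ≠ 0 := by positivity
  have h7 : (3 * (e : ℚ) + 5) ≠ 0 := by positivity
  have he : ((e : ℚ) + 2) ≠ 0 := by positivity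
  field_simp
  ring

/-! ### Coefficients of the relevant series -/

lemma constantCoeff_Dq (f : ℚ⟦X⟧) : constantCoeff (Dq f) = 0 := by
  have h := coeff_Dq 0 f
  simpa using h

lemma coeff_C₁ (n : ℕ) : coeff n C₁ = if n = 0 then 1 else n * aa n := by
  rcases n with _|m
  · simp [C₁, constantCoeff_Dq, coeff_one]
  · simp only [C₁, map_add, coeff_one, coeff_Dq, I₁, coeff_mk]
    simp [aa]

/-- `P = I₁ + 𝖣I₂₀`, the numerator of `J`. -/
def P : ℚ⟦X⟧ := I₁ + Dq I₂₀

lemma coeff_P (n : ℕ) : coeff n P = if n = 0 then 0 else aa n + n * bb n := by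
  rcases n with _|m
  · simp [P, constantCoeff_Dq, I₁, constantCoeff_mk]
  · simp only [P, map_add, coeff_Dq, I₁, I₂₀, coeff_mk]
    simp [aa, bb]

/-! ### The Picard–Fuchs type equations -/

lemma PF1 : (1 + C 27 * X) * Dq (Dq C₁) + C 27 * (X * Dq C₁) + C 6 * (X * C₁) = 0 := by
  have expand : (1 + C 27 * X) * Dq (Dq C₁) + C 27 * (X * Dq C₁) + C 6 * (X * C₁)
      = Dq (Dq C₁) + C 27 * (X * Dq (Dq C₁)) + C 27 * (X * Dq C₁) + C 6 * (X * C₁) := by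
    ring
  rw [expand]
  ext n
  rcases n with _|m
  · simp [constantCoeff_Dq]
  · simp only [map_add, coeff_C_mul, coeff_succ_X_mul, coeff_Dq, coeff_C₁, map_zero]
    rcases m with _|e
    · norm_num [aa_one]
    · simp only [Nat.succ_ne_zero, if_false]
      push_cast
      linear_combination aa_rec e

lemma PF2 : (1 + C 27 * X) * Dq (Dq P) + C 27 * (X * Dq P) + C 6 * (X * P)
    + 2 * ((1 + C 27 * X) * Dq C₁) + C 27 * (X * C₁) = 0 := by
  have expand : (1 + C 27 * X) * Dq (Dq P) + C 27 * (X * Dq P) + C 6 * (X * P)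
      + 2 * ((1 + C 27 * X) * Dq C₁) + C 27 * (X * C₁)
      = Dq (Dq P) + C 27 * (X * Dq (Dq P)) + C 27 * (X * Dq P) + C 6 * (X * P)
        + C 2 * Dq C₁ + C 54 * (X * Dq C₁) + C 27 * (X * C₁) := by
    have h54 : (C 54 : ℚ⟦X⟧) = 2 * C 27 := by
      rw [← map_ofNat C 2, ← map_mul]; norm_num
    have h2 : (C 2 : ℚ⟦X⟧) = 2 := map_ofNat _ _
    rw [h54, h2]; ring
  rw [expand]
  ext n
  rcases n with _|m
  · simp [constantCoeff_Dq]
  · simp only [map_add, coeff_C_mul, coeff_succ_X_mul, coeff_Dq, coeff_C₁, coeff_P, map_zero]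
    rcases m with _|e
    · norm_num [aa_one, bb_one]
    · simp only [Nat.succ_ne_zero, if_false]
      push_cast
      linear_combination bb_rec e

/-! ### Main theorem -/

/-- The combination `V = C₁² + C₁·𝖣P − P·𝖣C₁`, equal to `C₁²C₂`. -/
def V : ℚ⟦X⟧ := C₁ * C₁ + C₁ * Dq P - P * Dq C₁

lemma Dq_V : Dq V = 2 * (C₁ * Dq C₁) + (C₁ * Dq (Dq P) - P * Dq (Dq C₁)) := by
  rw [V, Dq_sub, Dq_add, Dq_mul, Dq_mul, Dq_mul]; ring

lemma Dq_W_eq_zero : Dq ((1 + C 27 * X) * V) = 0 := by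
  rw [Dq_mul, Dq_add, Dq_one, Dq_mul, Dq_C, Dq_X, Dq_V, V]
  linear_combination C₁ * PF2 - P * PF1

lemma constantCoeff_C₁ : constantCoeff C₁ = 1 := by
  have h := coeff_C₁ 0
  simpa using h

lemma constantCoeff_P : constantCoeff P = 0 := by
  have h := coeff_P 0
  simpa using h

lemma W_eq_one : (1 + C 27 * X) * V = 1 := by
  ext n
  rcases n with _|m
  · simp only [coeff_zero_eq_constantCoeff, map_mul, map_add, map_sub, map_one,
      constantCoeff_X, constantCoeff_C, V, constantCoeff_Dq, constantCoeff_C₁,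
      constantCoeff_P]
    norm_num
  · have h := congrArg (coeff (m + 1)) Dq_W_eq_zero
    rw [coeff_Dq, map_zero] at h
    have hm : ((m : ℚ) + 1) ≠ 0 := by positivity
    have h' : coeff (m + 1) ((1 + C 27 * X) * V) = 0 := by
      have := mul_eq_zero.mp (by push_cast at h ⊢; linarith [h] : ((m : ℚ) + 1) * coeff (m + 1) ((1 + C 27 * X) * V) = 0)
      tauto
    rw [h', coeff_one]
    simp

lemma J_mul_C₁ : J * C₁ = P := by
  have hC0 : constantCoeff C₁ ≠ 0 := by rw [constantCoeff_C₁]; norm_num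
  show (I₁ + Dq I₂₀) * C₁⁻¹ * C₁ = P
  rw [mul_assoc, PowerSeries.inv_mul_cancel C₁ hC0, mul_one]
  rfl

lemma Dq_J_mul : Dq J * C₁ + J * Dq C₁ = Dq P := by
  have h := congrArg Dq J_mul_C₁
  rw [Dq_mul] at h
  exact h

theorem stmt8 : (1 + 27 * PowerSeries.X) * C₁ ^ 2 * C₂ = 1 := by
  have h27 : (27 : ℚ⟦X⟧) = C 27 := (map_ofNat _ _).symm
  rw [h27, show C₂ = 1 + Dq J from rfl]
  have hW := W_eq_one
  rw [V] at hW
  linear_combination hW + (1 + C 27 * X) * (C₁ * Dq_J_mul - Dq C₁ * J_mul_C₁)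

end
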